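/- arXiv:2603.10250 — 5 statements merged into one kernel-verified Lean document; each statement's English description precedes it below -/
import Mathlib

section
/- Policy improvement for signed reweighting: let π be a probability mass function on a finite action set, Q : actions → ℝ, g : ℝ → ℝ strictly increasing, λ > 0, ν ∈ ℝ, and define π̃(a) = π(a) * g((Q a - ν)/λ). If ∑ a, π̃ a = 1 (π̃ may take negative values), then ∑ a, π̃ a * Q a ≥ ∑ a, π a * Q a. -/
open Finset

/-- Policy improvement for signed reweighting. -/
theorem stmt_1 (n : ℕ) (π Q : Fin n → ℝ) (g : ℝ → ℝ) (lam ν : ℝ)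
    (hπ : ∀ a, 0 ≤ π a) (hsum : ∑ a, π a = 1)
    (hg : StrictMono g) (hlam : 0 < lam)
    (πt : Fin n → ℝ) (hπt : ∀ a, πt a = π a * g ((Q a - ν) / lam))
    (hnorm : ∑ a, πt a = 1) :
    ∑ a, πt a * Q a ≥ ∑ a, π a * Q a := by
  set f : Fin n → ℝ := fun a => g ((Q a - ν) / lam) with hf
  have hmono : ∀ a b : Fin n, Q a ≤ Q b → f a ≤ f b := by
    intro a b h
    exact hg.monotone (by gcongr)
  have key : 0 ≤ ∑ a, ∑ b, π a * π b * ((f a - f b) * (Q a - Q b)) := by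
    apply Finset.sum_nonneg; intro a _
    apply Finset.sum_nonneg; intro b _
    apply mul_nonneg (mul_nonneg (hπ a) (hπ b))
    rcases le_total (Q a) (Q b) with h | h
    · nlinarith [sub_nonpos.2 (hmono a b h), sub_nonpos.2 h]
    · exact mul_nonneg (sub_nonneg.2 (hmono b a h)) (sub_nonneg.2 h)
  have expand : ∑ a, ∑ b, π a * π b * ((f a - f b) * (Q a - Q b)) =
      2 * (∑ a, πt a * Q a) - 2 * (∑ a, π a * Q a) := by
    have h1 : ∀ a b : Fin n, π a * π b * ((f a - f b) * (Q a - Q b)) =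
        (π a * f a * Q a) * π b - (π a * f a) * (π b * Q b)
          - (π a * Q a) * (π b * f b) + π a * (π b * f b * Q b) := by
      intro a b; ring
    simp only [h1, Finset.sum_add_distrib, Finset.sum_sub_distrib,
      ← Finset.sum_mul, ← Finset.mul_sum]
    have hfs : ∑ b, π b * f b = 1 := by
      rw [← hnorm]; exact Finset.sum_congr rfl fun a _ => (hπt a).symm
    have hfq : ∀ a : Fin n, πt a * Q a = π a * f a * Q a := by
      intro a; rw [hπt a]
    simp only [hfq]
    rw [hsum, hfs]
    ring
  rw [expand] at key
  linarith
end

section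
/- For λ > 0 and q : Fin N → ℝ, the derivative with respect to λ of f(λ) = λ * log(∑ᵢ exp(qᵢ/λ)) equals the Shannon entropy H(p) = -∑ᵢ pᵢ log pᵢ of the softmax distribution pᵢ = exp(qᵢ/λ) / ∑ⱼ exp(qⱼ/λ). -/
open Finset Real

/-- The derivative in `λ` of `f(λ) = λ · log ∑ᵢ exp(qᵢ/λ)` equals the Shannon
entropy `H(p) = -∑ pᵢ log pᵢ` of the softmax distribution `pᵢ = exp(qᵢ/λ)/Z`. -/
theorem stmt_7 (N : ℕ) (hN : 0 < N) (q : Fin N → ℝ) (lam : ℝ) (hlam : 0 < lam) :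
    HasDerivAt (fun t : ℝ => t * Real.log (∑ i, Real.exp (q i / t)))
      (-∑ i, (Real.exp (q i / lam) / ∑ j, Real.exp (q j / lam)) *
          Real.log (Real.exp (q i / lam) / ∑ j, Real.exp (q j / lam))) lam := by
  set Z : ℝ := ∑ j, Real.exp (q j / lam) with hZdef
  have hZ : 0 < Z := Finset.sum_pos (fun i _ => Real.exp_pos _) (by simp [Finset.univ_nonempty_iff, Fin.pos_iff_nonempty.mp hN])
  have hsum : HasDerivAt (fun t : ℝ => ∑ i, Real.exp (q i / t))
      (∑ i, Real.exp (q i / lam) * (-(q i) / lam ^ 2)) lam := by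
    apply HasDerivAt.fun_sum
    intro i _
    have hdiv : HasDerivAt (fun t : ℝ => q i / t) (-(q i) / lam ^ 2) lam := by
      have := (hasDerivAt_const lam (q i)).div (hasDerivAt_id lam) hlam.ne'
      simpa [Pi.div_def] using this
    simpa [Function.comp_def] using (Real.hasDerivAt_exp (q i / lam)).comp lam hdiv
  have hlog : HasDerivAt (fun t : ℝ => Real.log (∑ i, Real.exp (q i / t)))
      (Z⁻¹ * ∑ i, Real.exp (q i / lam) * (-(q i) / lam ^ 2)) lam := by
    have := (Real.hasDerivAt_log hZ.ne').comp lam hsum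
    simpa [one_div, Function.comp_def] using this
  have h := (hasDerivAt_id lam).mul hlog
  refine h.congr_deriv ?_
  symm
  have hlogp : ∀ i : Fin N, Real.log (Real.exp (q i / lam) / Z) = q i / lam - Real.log Z := by
    intro i
    rw [Real.log_div (Real.exp_pos _).ne' hZ.ne', Real.log_exp]
  have hone : (∑ i, Real.exp (q i / lam) / Z) = 1 := by
    rw [← Finset.sum_div, ← hZdef, div_self hZ.ne']
  calc -∑ i, (Real.exp (q i / lam) / Z) * Real.log (Real.exp (q i / lam) / Z)
      = -∑ i, ((Real.exp (q i / lam) / Z) * (q i / lam) - (Real.exp (q i / lam) / Z) * Real.log Z) := by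
        simp_rw [hlogp, mul_sub]
    _ = -(∑ i, (Real.exp (q i / lam) / Z) * (q i / lam)) + (∑ i, Real.exp (q i / lam) / Z) * Real.log Z := by
        rw [Finset.sum_sub_distrib, ← Finset.sum_mul]; ring
    _ = Real.log Z - ∑ i, (Real.exp (q i / lam) / Z) * (q i / lam) := by rw [hone]; ring
    _ = 1 * Real.log Z + id lam * (Z⁻¹ * ∑ i, Real.exp (q i / lam) * (-(q i) / lam ^ 2)) := by
        rw [Finset.mul_sum, Finset.mul_sum]
        have hterm : ∀ i : Fin N, id lam * (Z⁻¹ * (Real.exp (q i / lam) * (-(q i) / lam ^ 2)))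
            = -((Real.exp (q i / lam) / Z) * (q i / lam)) := by
          intro i; simp only [id_eq]; field_simp
        simp_rw [hterm, Finset.sum_neg_distrib]
        ring
end

section
/- Closed form for the linear ReLU normalization: let x₁ ≥ x₂ ≥ … ≥ x_N be real numbers, l > 0, and suppose k ∈ {1,…,N} is the unique index such that v := (∑_{j≤k} x_j - N·l)/k satisfies x_{k+1} ≤ v < x_k (with x_{N+1} := -∞). Then v is the unique real number satisfying (1/N)∑_{i=1}^N max(xᵢ - v, 0)/l = 1. -/
open Finset

/-- Closed form for the linear ReLU normalization: for descending samples `x₁ ≥ … ≥ x_N`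
and `l > 0`, if `k` is an index such that `v := (∑_{j ≤ k} x_j - N·l)/k` separates the
top `k` samples from the rest (`xᵢ > v` for the `k` largest, `xᵢ ≤ v` for the others),
then `v` is the unique solution of `(1/N) ∑ᵢ max(xᵢ - v, 0)/l = 1`. -/
theorem stmt_14 (N : ℕ) (x : Fin N → ℝ) (l : ℝ) (hl : 0 < l)
    (hsort : ∀ i j : Fin N, i ≤ j → x j ≤ x i)
    (k : ℕ) (hk1 : 1 ≤ k) (hk2 : k ≤ N)
    (v : ℝ)
    (hv : v = ((∑ j : Fin N, if (j : ℕ) < k then x j else 0) - N * l) / k)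
    (hactive : ∀ j : Fin N, (j : ℕ) < k → v < x j)
    (hinactive : ∀ j : Fin N, k ≤ (j : ℕ) → x j ≤ v) :
    ((1 : ℝ) / N) * ∑ i, max (x i - v) 0 / l = 1 ∧
    ∀ v' : ℝ, ((1 : ℝ) / N) * (∑ i, max (x i - v') 0 / l) = 1 → v' = v := by
  have hN : 0 < N := lt_of_lt_of_le hk1 hk2
  have hNR : (0:ℝ) < N := by exact_mod_cast hN
  have hkR : (0:ℝ) < k := by exact_mod_cast hk1
  -- count of active indices
  have hcount : ∀ c : ℝ, ∑ i : Fin N, (if (i:ℕ) < k then c else 0) = k * c := by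
    intro c
    rw [Fin.sum_univ_eq_sum_range (fun j => if j < k then c else 0)]
    rw [← Finset.sum_filter]
    have : (Finset.range N).filter (· < k) = Finset.range k := by
      ext j; simp; omega
    rw [this, Finset.sum_const, Finset.card_range, nsmul_eq_mul]
  -- key: sum of x over active minus k*v = N*l
  have hkey : (∑ j : Fin N, if (j : ℕ) < k then x j else 0) - k * v = N * l := by
    rw [hv]; field_simp; ring
  -- value of the sum at v
  have hsumv : ∑ i : Fin N, max (x i - v) 0 = N * l := by
    have : ∑ i : Fin N, max (x i - v) 0
        = ∑ i : Fin N, ((if (i:ℕ) < k then x i else 0) - (if (i:ℕ) < k then v else 0)) := by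
      apply Finset.sum_congr rfl
      intro i _
      by_cases h : (i:ℕ) < k
      · simp [h, max_eq_left (le_of_lt (sub_pos.mpr (hactive i h)))]
      · simp [h, max_eq_right (sub_nonpos.mpr (hinactive i (le_of_not_gt h)))]
    rw [this, Finset.sum_sub_distrib, hcount] at *
    linarith [hkey]
  constructor
  · rw [← Finset.sum_div, hsumv]
    field_simp
  · intro v' hv'
    have hsumv' : ∑ i : Fin N, max (x i - v') 0 = N * l := by
      rw [← Finset.sum_div] at hv'
      field_simp at hv'
      linarith
    by_contra hne
    rcases lt_or_gt_of_ne hne with hlt | hgt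
    · -- v' < v : sum at v' is > N*l
      have hge : ∑ i : Fin N, max (x i - v') 0
          ≥ ∑ i : Fin N, ((if (i:ℕ) < k then x i else 0) - (if (i:ℕ) < k then v' else 0)) := by
        apply Finset.sum_le_sum
        intro i _
        by_cases h : (i:ℕ) < k
        · simp [h]
        · simp [h]
      rw [Finset.sum_sub_distrib, hcount] at hge
      have : (∑ j : Fin N, if (j : ℕ) < k then x j else 0) - k * v' > N * l := by
        have : (k:ℝ) * v' < k * v := by
          exact mul_lt_mul_of_pos_left hlt hkR
        linarith [hkey]
      linarith [hsumv']
    · -- v < v' : sum at v' is < N*l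
      have hlt2 : ∑ i : Fin N, max (x i - v') 0 < ∑ i : Fin N, max (x i - v) 0 := by
        apply Finset.sum_lt_sum
        · intro i _
          exact max_le_max (by linarith) le_rfl
        · refine ⟨⟨0, hN⟩, Finset.mem_univ _, ?_⟩
          have h0 : v < x ⟨0, hN⟩ := hactive _ (by simp; omega)
          have : max (x ⟨0, hN⟩ - v') 0 < x ⟨0, hN⟩ - v := by
            apply max_lt <;> linarith
          calc max (x ⟨0, hN⟩ - v') 0 < x ⟨0, hN⟩ - v := this
            _ ≤ max (x ⟨0, hN⟩ - v) 0 := le_max_left _ _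
      rw [hsumv, hsumv'] at hlt2
      linarith
end

section
/- Uniqueness of the ReLU normalizer: for any x : Fin N → ℝ not all equal (or N ≥ 1 with max xᵢ finite) and any l > 0, the function φ(v) = (1/N)∑ᵢ max(xᵢ - v, 0)/l is continuous, strictly decreasing on (-∞, max xᵢ), tends to +∞ as v → -∞ and equals 0 for v ≥ max xᵢ; hence there exists a unique v with φ(v) = 1. -/
open Finset Filter

/-- Uniqueness of the ReLU normalizer: `φ(v) = (1/N) ∑ᵢ max(xᵢ - v, 0)/l` is continuous,
strictly decreasing on `(-∞, max xᵢ)`, tends to `+∞` as `v → -∞`, vanishes for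
`v ≥ max xᵢ`, and hence there is a unique `v` with `φ(v) = 1`. -/
theorem stmt_15 (N : ℕ) (hN : 1 ≤ N) (x : Fin N → ℝ) (l : ℝ) (hl : 0 < l)
    (φ : ℝ → ℝ) (hφ : ∀ v, φ v = ((1 : ℝ) / N) * ∑ i, max (x i - v) 0 / l)
    (M : ℝ) (hM : M = Finset.univ.sup' ⟨⟨0, hN⟩, Finset.mem_univ _⟩ x) :
    Continuous φ ∧
    StrictAntiOn φ (Set.Iio M) ∧
    Tendsto φ atBot atTop ∧
    (∀ v, M ≤ v → φ v = 0) ∧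
    (∃! v : ℝ, φ v = 1) := by
  have hφ' : φ = fun v => ((1 : ℝ) / N) * ∑ i, max (x i - v) 0 / l := funext hφ
  subst hφ'
  have hne : (Finset.univ : Finset (Fin N)).Nonempty := ⟨⟨0, hN⟩, Finset.mem_univ _⟩
  obtain ⟨i0, -, hi0⟩ := Finset.exists_mem_eq_sup' hne x
  have hxM : ∀ i, x i ≤ M := by
    intro i; rw [hM]; exact Finset.le_sup' x (Finset.mem_univ i)
  have hMi0 : M = x i0 := by rw [hM, hi0]
  have hNpos : (0 : ℝ) < N := by exact_mod_cast hN
  have hcpos : (0 : ℝ) < 1 / N := by positivity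
  -- continuity
  have hcont : Continuous fun v => ((1 : ℝ) / N) * ∑ i, max (x i - v) 0 / l := by
    apply Continuous.mul continuous_const
    apply continuous_finset_sum
    intro i _
    exact ((continuous_const.sub continuous_id).max continuous_const).div_const l
  refine ⟨hcont, ?_, ?_, ?_, ?_⟩
  · -- strict anti on Iio M
    intro a _ b hb hab
    simp only
    apply mul_lt_mul_of_pos_left _ hcpos
    apply Finset.sum_lt_sum
    · intro i _
      exact div_le_div_of_nonneg_right (max_le_max (by linarith) le_rfl) hl.le
    · refine ⟨i0, Finset.mem_univ _, ?_⟩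
      have hbx : b < x i0 := by rw [← hMi0]; exact hb
      have h1 : max (x i0 - b) 0 = x i0 - b := max_eq_left (by linarith)
      have h2 : max (x i0 - a) 0 = x i0 - a := max_eq_left (by linarith)
      rw [h1, h2]
      gcongr
  · -- tendsto atBot atTop
    have hbound : ∀ v, ((1 : ℝ) / N) * ((x i0 - v) / l) ≤
        ((1 : ℝ) / N) * ∑ i, max (x i - v) 0 / l := by
      intro v
      apply mul_le_mul_of_nonneg_left _ hcpos.le
      calc (x i0 - v) / l ≤ max (x i0 - v) 0 / l :=
            div_le_div_of_nonneg_right (le_max_left _ _) hl.le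
        _ ≤ ∑ i, max (x i - v) 0 / l := by
            apply Finset.single_le_sum (f := fun i => max (x i - v) 0 / l)
              (fun i _ => by positivity) (Finset.mem_univ i0)
    apply tendsto_atTop_mono hbound
    apply Tendsto.const_mul_atTop hcpos
    apply Tendsto.atTop_div_const hl
    have : Tendsto (fun v : ℝ => -v) atBot atTop := tendsto_neg_atBot_atTop
    have := tendsto_atTop_add_const_left atBot (x i0) this
    exact Tendsto.congr (fun v => (sub_eq_add_neg _ _).symm) this
  · -- zero for v ≥ M
    intro v hv
    simp only
    have : ∀ i, max (x i - v) 0 = 0 := fun i => max_eq_right (by linarith [hxM i])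
    simp [this]
  · -- existence and uniqueness
    set f : ℝ → ℝ := fun v => ((1 : ℝ) / N) * ∑ i, max (x i - v) 0 / l with hf
    have hzero : ∀ v, M ≤ v → f v = 0 := by
      intro v hv
      have : ∀ i, max (x i - v) 0 = 0 := fun i => max_eq_right (by linarith [hxM i])
      simp [hf, this]
    have hanti : StrictAntiOn f (Set.Iio M) := by
      intro a _ hb hbM hab
      apply mul_lt_mul_of_pos_left _ hcpos
      apply Finset.sum_lt_sum
      · intro i _
        exact div_le_div_of_nonneg_right (max_le_max (by linarith) le_rfl) hl.le
      · refine ⟨i0, Finset.mem_univ _, ?_⟩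
        have hbx : hb < x i0 := by rw [← hMi0]; exact hbM
        rw [max_eq_left (by linarith), max_eq_left (by linarith)]
        gcongr
    have htop : Tendsto f atBot atTop := by
      have hbound : ∀ v, ((1 : ℝ) / N) * ((x i0 - v) / l) ≤ f v := by
        intro v
        apply mul_le_mul_of_nonneg_left _ hcpos.le
        calc (x i0 - v) / l ≤ max (x i0 - v) 0 / l :=
              div_le_div_of_nonneg_right (le_max_left _ _) hl.le
          _ ≤ ∑ i, max (x i - v) 0 / l :=
              Finset.single_le_sum (f := fun i => max (x i - v) 0 / l)
                (fun i _ => by positivity) (Finset.mem_univ i0)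
      apply tendsto_atTop_mono hbound
      apply Tendsto.const_mul_atTop hcpos
      apply Tendsto.atTop_div_const hl
      have h1 : Tendsto (fun v : ℝ => -v) atBot atTop := tendsto_neg_atBot_atTop
      have h2 := tendsto_atTop_add_const_left atBot (x i0) h1
      exact Tendsto.congr (fun v => (sub_eq_add_neg _ _).symm) h2
    obtain ⟨v0, hv0big, hv0lt⟩ :=
      ((htop.eventually_ge_atTop 2).and (eventually_lt_atBot M)).exists
    have hsub := intermediate_value_Icc' hv0lt.le hcont.continuousOn
    have h1mem : (1 : ℝ) ∈ Set.Icc (f M) (f v0) := by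
      rw [hzero M le_rfl]
      exact ⟨zero_le_one, by linarith⟩
    obtain ⟨c, hcmem, hc⟩ := hsub h1mem
    have hsolLt : ∀ y, f y = 1 → y < M := by
      intro y hy
      by_contra h
      push_neg at h
      rw [hzero y h] at hy
      norm_num at hy
    refine ⟨c, hc, ?_⟩
    intro y hy
    exact hanti.injOn (hsolLt y hy) (hsolLt c hc) (by rw [hy, hc])
end

section
/- Uniqueness of the squared ReLU normalizer: for x : Fin N → ℝ, N ≥ 1, and l > 0, the function ψ(v) = (1/N)∑ᵢ (max(xᵢ - v, 0)/l)² is continuous, strictly decreasing on (-∞, max xᵢ), tends to +∞ as v → -∞, and is 0 for v ≥ max xᵢ; hence there exists a unique v with ψ(v) = 1. Moreover, if S = {i : xᵢ > v} has size k, then v = (S₁ - sqrt(S₁² - k(S₂ - N l²)))/k, where S₁ = ∑_{i∈S} xᵢ and S₂ = ∑_{i∈S} xᵢ². -/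
open Finset Filter

/-- Uniqueness and closed form of the squared ReLU normalizer:
`ψ(v) = (1/N) ∑ᵢ (max(xᵢ - v, 0)/l)²` is continuous, strictly decreasing on
`(-∞, max xᵢ)`, tends to `+∞` as `v → -∞`, vanishes for `v ≥ max xᵢ`, hence there is a
unique `v` with `ψ(v) = 1`; moreover if the active set `S = {i : xᵢ > v}` has size `k`
then `v = (S₁ - √(S₁² - k(S₂ - N l²)))/k` with `S₁ = ∑_{i∈S} xᵢ`, `S₂ = ∑_{i∈S} xᵢ²`. -/
theorem stmt_16 (N : ℕ) (hN : 1 ≤ N) (x : Fin N → ℝ) (l : ℝ) (hl : 0 < l)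
    (ψ : ℝ → ℝ) (hψ : ∀ v, ψ v = ((1 : ℝ) / N) * ∑ i, (max (x i - v) 0 / l) ^ 2)
    (M : ℝ) (hM : M = Finset.univ.sup' ⟨⟨0, hN⟩, Finset.mem_univ _⟩ x) :
    Continuous ψ ∧
    StrictAntiOn ψ (Set.Iio M) ∧
    Tendsto ψ atBot atTop ∧
    (∀ v, M ≤ v → ψ v = 0) ∧
    (∃! v : ℝ, ψ v = 1) ∧
    (∀ v : ℝ, ψ v = 1 →
      ∀ S : Finset (Fin N), S = Finset.univ.filter (fun i => v < x i) →
        v = ((∑ i ∈ S, x i) -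
              Real.sqrt ((∑ i ∈ S, x i) ^ 2
                - (S.card : ℝ) * ((∑ i ∈ S, (x i) ^ 2) - N * l ^ 2))) / (S.card : ℝ)) := by
  have hNpos : (0:ℝ) < (N:ℝ) := by exact_mod_cast Nat.lt_of_lt_of_le Nat.zero_lt_one hN
  have hle : ∀ i, x i ≤ M := fun i => hM ▸ Finset.le_sup' x (mem_univ i)
  obtain ⟨j, -, hj⟩ := Finset.exists_mem_eq_sup' ⟨⟨0, hN⟩, Finset.mem_univ _⟩ x
  have hxj : x j = M := by rw [hM, hj]
  have hcont : Continuous ψ := by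
    have hψ' : ψ = fun v => ((1:ℝ)/N) * ∑ i, (max (x i - v) 0 / l) ^ 2 := funext hψ
    rw [hψ']
    exact continuous_const.mul (continuous_finset_sum _ fun i _ =>
      (((continuous_const.sub continuous_id).max continuous_const).div_const l).pow 2)
  have hanti : StrictAntiOn ψ (Set.Iio M) := by
    intro u hu v hv huv
    rw [hψ u, hψ v]
    apply mul_lt_mul_of_pos_left _ (by positivity)
    apply Finset.sum_lt_sum
    · intro i _
      have h1 : max (x i - v) 0 ≤ max (x i - u) 0 :=
        max_le_max (by linarith) le_rfl
      exact pow_le_pow_left₀ (by positivity) (by gcongr) 2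
    · refine ⟨j, mem_univ j, ?_⟩
      have hvM : v < M := hv
      have h1 : max (x j - v) 0 = x j - v := max_eq_left (by rw [hxj]; linarith)
      have h2 : max (x j - u) 0 = x j - u := max_eq_left (by rw [hxj]; linarith)
      rw [h1, h2]
      have hlt : (x j - v) / l < (x j - u) / l := by gcongr
      exact pow_lt_pow_left₀ hlt (div_nonneg (by rw [hxj]; linarith) hl.le) two_ne_zero
  have htop : Tendsto ψ atBot atTop := by
    have hg : Tendsto (fun v : ℝ => ((1:ℝ)/N) * ((M - v)/l)^2) atBot atTop := by
      apply Tendsto.const_mul_atTop (by positivity)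
      apply Tendsto.comp (tendsto_pow_atTop two_ne_zero)
      apply Tendsto.atTop_div_const hl
      have : Tendsto (fun v : ℝ => M + -v) atBot atTop :=
        tendsto_atTop_add_const_left _ M tendsto_neg_atBot_atTop
      exact this.congr (fun v => by ring)
    apply tendsto_atTop_mono' atBot ?_ hg
    filter_upwards [eventually_le_atBot M] with v hv
    rw [hψ v]
    apply mul_le_mul_of_nonneg_left _ (by positivity)
    have heq : ((M - v)/l)^2 = (max (x j - v) 0 / l)^2 := by
      rw [max_eq_left (by rw [hxj]; linarith), hxj]
    rw [heq]
    exact Finset.single_le_sum (f := fun i => (max (x i - v) 0 / l)^2) (fun i _ => by positivity) (mem_univ j)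
  have hzero : ∀ v, M ≤ v → ψ v = 0 := by
    intro v hv
    rw [hψ v]
    have hz : ∀ i ∈ univ, (max (x i - v) 0 / l)^2 = 0 := by
      intro i _
      rw [max_eq_right (by linarith [hle i])]
      simp
    rw [Finset.sum_congr rfl hz]
    simp
  have hltM : ∀ u, ψ u = 1 → u < M := by
    intro u hu
    by_contra h
    push_neg at h
    rw [hzero u h] at hu; norm_num at hu
  have hexu : ∃! v, ψ v = 1 := by
    obtain ⟨a, ha1, haM⟩ := ((htop.eventually_ge_atTop 1).and (eventually_le_atBot M)).exists
    have h01 : (1:ℝ) ∈ Set.Icc (ψ M) (ψ a) := ⟨by rw [hzero M le_rfl]; norm_num, ha1⟩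
    obtain ⟨v, hvmem, hveq⟩ := intermediate_value_Icc' haM hcont.continuousOn h01
    refine ⟨v, hveq, fun w hw => ?_⟩
    exact hanti.injOn (hltM w hw) (hltM v hveq) (by rw [hw, hveq])
  refine ⟨hcont, hanti, htop, hzero, hexu, ?_⟩
  intro v hv S hS
  have hvM : v < M := hltM v hv
  have hjS : j ∈ S := by
    rw [hS, mem_filter]
    exact ⟨mem_univ j, by rw [hxj]; exact hvM⟩
  have hSne : S.Nonempty := ⟨j, hjS⟩
  have hk : (0:ℝ) < (S.card : ℝ) := by exact_mod_cast Finset.card_pos.mpr hSne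
  set k : ℝ := (S.card : ℝ) with hkdef
  set S1 := ∑ i ∈ S, x i with hS1
  set S2 := ∑ i ∈ S, (x i)^2 with hS2
  have hsum : ∑ i, (max (x i - v) 0 / l)^2 = ∑ i ∈ S, ((x i - v)/l)^2 := by
    rw [← Finset.sum_filter_add_sum_filter_not univ (fun i => v < x i), ← hS]
    have h1 : ∑ i ∈ S, (max (x i - v) 0 / l)^2 = ∑ i ∈ S, ((x i - v)/l)^2 := by
      apply Finset.sum_congr rfl
      intro i hi
      rw [hS, mem_filter] at hi
      rw [max_eq_left (by linarith [hi.2])]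
    have h2 : ∑ i ∈ univ.filter (fun i => ¬ v < x i), (max (x i - v) 0 / l)^2 = 0 := by
      apply Finset.sum_eq_zero
      intro i hi
      rw [mem_filter] at hi
      push_neg at hi
      rw [max_eq_right (by linarith [hi.2])]
      simp
    rw [h1, h2, add_zero]
  rw [hψ v, hsum] at hv
  have hdiv : ∑ i ∈ S, ((x i - v)/l)^2 = (∑ i ∈ S, (x i - v)^2) / l^2 := by
    rw [Finset.sum_div]
    exact Finset.sum_congr rfl fun i _ => div_pow _ _ _
  rw [hdiv] at hv
  have hexp : ∑ i ∈ S, (x i - v)^2 = S2 - 2*v*S1 + k*v^2 := by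
    have hc : ∀ i ∈ S, (x i - v)^2 = (x i)^2 - 2*v*(x i) + v^2 := fun i _ => by ring
    rw [Finset.sum_congr rfl hc, Finset.sum_add_distrib, Finset.sum_sub_distrib,
        ← Finset.mul_sum, Finset.sum_const, nsmul_eq_mul]
  rw [hexp] at hv
  have hquad : S2 - 2*v*S1 + k*v^2 = N * l^2 := by
    have hlne : (l:ℝ)^2 ≠ 0 := by positivity
    have hNne : (N:ℝ) ≠ 0 := ne_of_gt hNpos
    field_simp at hv
    linarith
  have hA : 0 < S1 - k*v := by
    have heq : S1 - k*v = ∑ i ∈ S, (x i - v) := by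
      rw [Finset.sum_sub_distrib, Finset.sum_const, nsmul_eq_mul]
    rw [heq]
    refine Finset.sum_pos (fun i hi => ?_) hSne
    rw [hS, mem_filter] at hi
    linarith [hi.2]
  have hdisc : S1^2 - k*(S2 - N*l^2) = (S1 - k*v)^2 := by
    linear_combination (-k) * hquad
  rw [hdisc, Real.sqrt_sq hA.le]
  field_simp
  ring
end
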